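/- Let θ > 0, α > 0 and 0 < β ≤ θ + 1. Then F is 2-increasing: for all 0 < x₁ ≤ x₂ and 0 < y₁ ≤ y₂, the rectangle inequality F(x₂, y₂) − F(x₁, y₂) − F(x₂, y₁) + F(x₁, y₁) ≥ 0 holds. (This is the condition under which the skewed Clayton function is a valid positive Lévy copula.) -/

import Mathlib

open Real Set

noncomputable def Sf (θ α β x y : ℝ) : ℝ := (α * y ^ (-β) + 1) * x ^ (-θ) + y ^ (-θ)

lemma Sf_pos {θ α β x y : ℝ} (hα : 0 < α) (hx : 0 < x) (hy : 0 < y) :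
    0 < Sf θ α β x y := by
  have h1 := Real.rpow_pos_of_pos hx (-θ)
  have h2 := Real.rpow_pos_of_pos hy (-θ)
  have h3 := Real.rpow_pos_of_pos hy (-β)
  unfold Sf; positivity

/-- partial derivative of F in y, as expression -/
noncomputable def gf (θ α β y x : ℝ) : ℝ :=
  (α * β / θ * y ^ (-β - 1) * x ^ (-θ) + y ^ (-θ - 1)) * Sf θ α β x y ^ (-1 / θ - 1)

lemma hasDerivAt_Sf_y {θ α β x : ℝ} (y : ℝ) (hy : 0 < y) :
    HasDerivAt (fun y => Sf θ α β x y)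
      (α * (-β * y ^ (-β - 1)) * x ^ (-θ) + (-θ * y ^ (-θ - 1))) y := by
  have hb : HasDerivAt (fun y : ℝ => y ^ (-β)) (-β * y ^ (-β - 1)) y :=
    Real.hasDerivAt_rpow_const (Or.inl hy.ne')
  have ht : HasDerivAt (fun y : ℝ => y ^ (-θ)) (-θ * y ^ (-θ - 1)) y :=
    Real.hasDerivAt_rpow_const (Or.inl hy.ne')
  have h := (((hb.const_mul α).mul_const (x ^ (-θ))).add_const (x ^ (-θ))).add ht
  have heq : (fun y => Sf θ α β x y)
      = fun y => α * y ^ (-β) * x ^ (-θ) + x ^ (-θ) + y ^ (-θ) := by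
    funext y; unfold Sf; ring
  rw [heq]
  exact h

lemma hasDerivAt_F_y {θ α β x : ℝ} (hθ : 0 < θ) (hα : 0 < α) (hx : 0 < x)
    (y : ℝ) (hy : 0 < y) :
    HasDerivAt (fun y => Sf θ α β x y ^ (-1 / θ)) (gf θ α β y x) y := by
  have hS := hasDerivAt_Sf_y (θ := θ) (α := α) (β := β) (x := x) y hy
  have h := hS.rpow_const (p := -1 / θ) (Or.inl (Sf_pos hα hx hy).ne')
  have hθ' : θ ≠ 0 := hθ.ne'
  have hc : (α * β / θ * y ^ (-β - 1) * x ^ (-θ) + y ^ (-θ - 1))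
      = (α * (-β * y ^ (-β - 1)) * x ^ (-θ) + -θ * y ^ (-θ - 1)) * (-1 / θ) := by
    field_simp; ring
  unfold gf
  rw [hc]
  convert h using 1

lemma hasDerivAt_Sf_x {θ α β y : ℝ} (x : ℝ) (hx : 0 < x) :
    HasDerivAt (fun x => Sf θ α β x y)
      ((α * y ^ (-β) + 1) * (-θ * x ^ (-θ - 1))) x := by
  have ht : HasDerivAt (fun x : ℝ => x ^ (-θ)) (-θ * x ^ (-θ - 1)) x :=
    Real.hasDerivAt_rpow_const (Or.inl hx.ne')
  have h := (ht.const_mul (α * y ^ (-β) + 1)).add_const (y ^ (-θ))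
  exact h

lemma hasDerivAt_gf_x {θ α β y : ℝ} (hα : 0 < α) (x : ℝ) (hx : 0 < x) (hy : 0 < y) :
    HasDerivAt (fun x => gf θ α β y x)
      (α * β / θ * y ^ (-β - 1) * (-θ * x ^ (-θ - 1)) * Sf θ α β x y ^ (-1 / θ - 1)
        + (α * β / θ * y ^ (-β - 1) * x ^ (-θ) + y ^ (-θ - 1))
          * ((α * y ^ (-β) + 1) * (-θ * x ^ (-θ - 1)) * (-1 / θ - 1)
              * Sf θ α β x y ^ (-1 / θ - 1 - 1))) x := by
  have ht : HasDerivAt (fun x : ℝ => x ^ (-θ)) (-θ * x ^ (-θ - 1)) x :=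
    Real.hasDerivAt_rpow_const (Or.inl hx.ne')
  have h1 := (ht.const_mul (α * β / θ * y ^ (-β - 1))).add_const (y ^ (-θ - 1))
  have h2 := (hasDerivAt_Sf_x (θ := θ) (α := α) (β := β) (y := y) x hx).rpow_const
    (p := -1 / θ - 1) (Or.inl (Sf_pos hα hx hy).ne')
  exact h1.mul h2

lemma key_nonneg {θ α β x y : ℝ} (hθ : 0 < θ) (hα : 0 < α) (hβ : 0 < β)
    (hβθ : β ≤ θ + 1) (hx : 0 < x) (hy : 0 < y) :
    0 ≤ α * β / θ * y ^ (-β - 1) * (-θ * x ^ (-θ - 1)) * Sf θ α β x y ^ (-1 / θ - 1)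
        + (α * β / θ * y ^ (-β - 1) * x ^ (-θ) + y ^ (-θ - 1))
          * ((α * y ^ (-β) + 1) * (-θ * x ^ (-θ - 1)) * (-1 / θ - 1)
              * Sf θ α β x y ^ (-1 / θ - 1 - 1)) := by
  have hS := Sf_pos (θ := θ) (β := β) hα hx hy
  have hθ' : θ ≠ 0 := hθ.ne'
  have h1 : Sf θ α β x y ^ (-1 / θ - 1)
      = Sf θ α β x y ^ (-1 / θ - 1 - 1) * Sf θ α β x y := by
    rw [← Real.rpow_add_one hS.ne']; congr 1; ring
  have h2 : x ^ (-θ) = x ^ (-θ - 1) * x := by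
    rw [← Real.rpow_add_one hx.ne']; congr 1; ring
  rw [h1]
  unfold Sf
  rw [h2]
  set P := x ^ (-θ - 1) with hPdef
  have hP : 0 < P := Real.rpow_pos_of_pos hx _
  have hyb : 0 < y ^ (-β) := Real.rpow_pos_of_pos hy _
  have hyt : 0 < y ^ (-θ) := Real.rpow_pos_of_pos hy _
  have hyb1 : 0 < y ^ (-β - 1) := Real.rpow_pos_of_pos hy _
  have hyt1 : 0 < y ^ (-θ - 1) := Real.rpow_pos_of_pos hy _
  have hR : 0 < (α * y ^ (-β) + 1) * (P * x) + y ^ (-θ) := by positivity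
  set Q := ((α * y ^ (-β) + 1) * (P * x) + y ^ (-θ)) ^ (-1 / θ - 1 - 1) with hQdef
  have hQ : 0 < Q := Real.rpow_pos_of_pos hR _
  have hkey : y ^ (-β - 1) * y ^ (-θ) = y ^ (-β) * y ^ (-θ - 1) := by
    rw [← Real.rpow_add hy, ← Real.rpow_add hy]; ring_nf
  have hEq : α * β / θ * y ^ (-β - 1) * (-θ * P)
        * (((α * y ^ (-β) + 1) * (P * x) + y ^ (-θ)) ^ (-1 / θ - 1 - 1)
            * ((α * y ^ (-β) + 1) * (P * x) + y ^ (-θ)))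
      + (α * β / θ * y ^ (-β - 1) * (P * x) + y ^ (-θ - 1))
        * ((α * y ^ (-β) + 1) * (-θ * P) * (-1 / θ - 1)
            * ((α * y ^ (-β) + 1) * (P * x) + y ^ (-θ)) ^ (-1 / θ - 1 - 1))
      = P * Q
        * ((α * y ^ (-β) + 1) * (α * β / θ * y ^ (-β - 1)) * (x * P)
            + (θ + 1) * (α * y ^ (-β) + 1) * y ^ (-θ - 1)
            - α * β * (y ^ (-β - 1) * y ^ (-θ))) := by
    rw [hQdef]
    field_simp
    ring
  rw [hEq, hkey]
  have hB : 0 ≤ (α * y ^ (-β) + 1) * (α * β / θ * y ^ (-β - 1)) * (x * P)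
      + (θ + 1) * (α * y ^ (-β) + 1) * y ^ (-θ - 1)
      - α * β * (y ^ (-β) * y ^ (-θ - 1)) := by
    have t1 : 0 ≤ (α * y ^ (-β) + 1) * (α * β / θ * y ^ (-β - 1)) * (x * P) := by positivity
    have t2 : 0 ≤ (θ + 1 - β) * (α * (y ^ (-β) * y ^ (-θ - 1))) :=
      mul_nonneg (by linarith) (by positivity)
    nlinarith [hyt1, mul_pos hθ hyt1]
  exact mul_nonneg (mul_nonneg hP.le hQ.le) hB

lemma gf_mono {θ α β y : ℝ} (hθ : 0 < θ) (hα : 0 < α) (hβ : 0 < β)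
    (hβθ : β ≤ θ + 1) (hy : 0 < y) : MonotoneOn (gf θ α β y) (Ioi 0) := by
  apply monotoneOn_of_deriv_nonneg (convex_Ioi 0)
  · intro x hx
    exact (hasDerivAt_gf_x hα x hx hy).continuousAt.continuousWithinAt
  · rw [interior_Ioi]; intro x hx
    exact (hasDerivAt_gf_x hα x hx hy).differentiableAt.differentiableWithinAt
  · rw [interior_Ioi]; intro x hx
    rw [(hasDerivAt_gf_x hα x hx hy).deriv]
    exact key_nonneg hθ hα hβ hβθ hx hy

lemma diff_mono {θ α β x₁ x₂ : ℝ} (hθ : 0 < θ) (hα : 0 < α) (hβ : 0 < β)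
    (hβθ : β ≤ θ + 1) (hx₁ : 0 < x₁) (h12 : x₁ ≤ x₂) :
    MonotoneOn (fun y => Sf θ α β x₂ y ^ (-1 / θ) - Sf θ α β x₁ y ^ (-1 / θ)) (Ioi 0) := by
  have hx₂ : 0 < x₂ := lt_of_lt_of_le hx₁ h12
  apply monotoneOn_of_deriv_nonneg (convex_Ioi 0)
  · intro y hy
    exact ((hasDerivAt_F_y hθ hα hx₂ y hy).sub
      (hasDerivAt_F_y hθ hα hx₁ y hy)).continuousAt.continuousWithinAt
  · rw [interior_Ioi]; intro y hy
    exact ((hasDerivAt_F_y hθ hα hx₂ y hy).sub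
      (hasDerivAt_F_y hθ hα hx₁ y hy)).differentiableAt.differentiableWithinAt
  · rw [interior_Ioi]; intro y hy
    rw [HasDerivAt.deriv (f := fun y => Sf θ α β x₂ y ^ (-1 / θ) - Sf θ α β x₁ y ^ (-1 / θ))
      ((hasDerivAt_F_y hθ hα hx₂ y hy).sub (hasDerivAt_F_y hθ hα hx₁ y hy))]
    have := gf_mono hθ hα hβ hβθ hy (mem_Ioi.2 hx₁) (mem_Ioi.2 hx₂) h12
    linarith


/-- For `θ > 0`, `α > 0`, `0 < β ≤ θ + 1`, the skewed Clayton Lévy copula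
`F(x,y) = ((α y^(−β) + 1) x^(−θ) + y^(−θ))^(−1/θ)` is 2-increasing: for all
`0 < x₁ ≤ x₂` and `0 < y₁ ≤ y₂`, `F(x₂,y₂) − F(x₁,y₂) − F(x₂,y₁) + F(x₁,y₁) ≥ 0`. -/
theorem stmt_9 (θ α β : ℝ) (hθ : 0 < θ) (hα : 0 < α) (hβ : 0 < β) (hβθ : β ≤ θ + 1) :
    ∀ x₁ x₂ y₁ y₂ : ℝ, 0 < x₁ → x₁ ≤ x₂ → 0 < y₁ → y₁ ≤ y₂ →
      0 ≤ ((α * y₂ ^ (-β) + 1) * x₂ ^ (-θ) + y₂ ^ (-θ)) ^ (-1 / θ)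
          - ((α * y₂ ^ (-β) + 1) * x₁ ^ (-θ) + y₂ ^ (-θ)) ^ (-1 / θ)
          - ((α * y₁ ^ (-β) + 1) * x₂ ^ (-θ) + y₁ ^ (-θ)) ^ (-1 / θ)
          + ((α * y₁ ^ (-β) + 1) * x₁ ^ (-θ) + y₁ ^ (-θ)) ^ (-1 / θ) := by
  intro x₁ x₂ y₁ y₂ hx₁ h12 hy₁ h34
  have hy₂ : 0 < y₂ := lt_of_lt_of_le hy₁ h34
  have h := diff_mono hθ hα hβ hβθ hx₁ h12 (mem_Ioi.2 hy₁) (mem_Ioi.2 hy₂) h34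
  simp only [Sf] at h
  linarith
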